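/- For a cluster 𝒜 (a finite collection of finite subsets of ℕ whose adjacency graph with edges {A, A'} for dist(A, A') ≤ 1 is connected), one has ∑_{A ∈ 𝒜} d(A) ≥ d(𝒜), where d(A) = 1 + max A − min A and d(𝒜) = 1 + max(∪_{A∈𝒜} A) − min(∪_{A∈𝒜} A). Consequently, if every A ∈ 𝒜 satisfies d(A) ≥ 2, then ∏_{A ∈ 𝒜} d(A)^α ≥ d(𝒜)^α for every α > 0. -/

import Mathlib

open scoped BigOperators ENNReal
attribute [local instance] Classical.propDecidable

noncomputable section

/-- Two finite subsets of `ℕ` are adjacent iff their distance is at most `1`. -/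
def adjP (A B : Finset ℕ) : Prop := ∃ a ∈ A, ∃ b ∈ B, a ≤ b + 1 ∧ b ≤ a + 1

/-- The diameter `d(A) = 1 + max A − min A` of a finite subset of `ℕ`. -/
def diamP (A : Finset ℕ) : ℕ := 1 + (A.max).unbotD 0 - (A.min).untopD 0

/-- A collection of polymers is a cluster: its adjacency graph is connected. -/
def clusterConn (𝒜 : Finset (Finset ℕ)) : Prop :=
  ∀ A ∈ 𝒜, ∀ B ∈ 𝒜, Relation.ReflTransGen (fun X Y => X ∈ 𝒜 ∧ Y ∈ 𝒜 ∧ adjP X Y) A B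

/-- The graph on vertex set `V` with edge set `E` is connected. -/
def connectedOn (V : Finset (Finset ℕ)) (E : Finset (Sym2 (Finset ℕ))) : Prop :=
  ∀ x ∈ V, ∀ y ∈ V, Relation.ReflTransGen (fun u v => s(u, v) ∈ E) x y

/-- The truncated (cluster) weight
`w^T(𝒜) = ∑_{connected graphs G on 𝒜} (−1)^{|E(G)|} ∏_{{A,A'} ∈ E(G)} 1[A ∼ A'] ∏_{A ∈ 𝒜} w(A)`. -/
def truncWeight (w : Finset ℕ → ℂ) (𝒜 : Finset (Finset ℕ)) : ℂ :=
  ∑ E ∈ ((𝒜.sym2.filter fun e => ¬ e.IsDiag).powerset.filter fun E => connectedOn 𝒜 E),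
    (-1 : ℂ) ^ E.card
      * (∏ e ∈ E, if ∀ X Y : Finset ℕ, e = s(X, Y) → adjP X Y then (1 : ℂ) else 0)
      * ∏ A ∈ 𝒜, w A

/-- The interval spanned by a finite set. -/
def fIP (A : Finset ℕ) : Finset ℕ := Finset.Icc ((A.min).untopD 0) ((A.max).unbotD 0)

lemma fIP_eq (A : Finset ℕ) (hA : A.Nonempty) :
    fIP A = Finset.Icc (A.min' hA) (A.max' hA) := by
  unfold fIP
  rw [← Finset.coe_min' hA, ← Finset.coe_max' hA]
  rfl

lemma mem_fIP {A : Finset ℕ} {a : ℕ} (ha : a ∈ A) : a ∈ fIP A := by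
  have hA : A.Nonempty := ⟨a, ha⟩
  rw [fIP_eq A hA, Finset.mem_Icc]
  exact ⟨Finset.min'_le A a ha, Finset.le_max' A a ha⟩

lemma diamP_eq_card (A : Finset ℕ) : diamP A = (fIP A).card := by
  unfold diamP fIP
  rw [Nat.card_Icc, Nat.add_comm]

lemma interval_subset (𝒜 : Finset (Finset ℕ)) (hne : ∀ A ∈ 𝒜, A.Nonempty)
    {A B : Finset ℕ}
    (hpath : Relation.ReflTransGen (fun X Y => X ∈ 𝒜 ∧ Y ∈ 𝒜 ∧ adjP X Y) A B)
    (hA : A ∈ 𝒜) :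
    ∀ x ∈ fIP A, ∀ y ∈ fIP B, ∀ z, x ≤ z → z ≤ y → z ∈ 𝒜.biUnion fIP := by
  induction hpath with
  | refl =>
    intro x hx y hy z hxz hzy
    have hAne := hne A hA
    rw [fIP_eq A hAne, Finset.mem_Icc] at hx hy
    refine Finset.mem_biUnion.2 ⟨A, hA, ?_⟩
    rw [fIP_eq A hAne, Finset.mem_Icc]
    exact ⟨le_trans hx.1 hxz, le_trans hzy hy.2⟩
  | @tail C B h1 hCB ih =>
    intro x hx y hy z hxz hzy
    obtain ⟨hC, hB, c, hc, b, hb, hcb, hbc⟩ := hCB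
    have hCne := hne C hC
    have hBne := hne B hB
    rw [fIP_eq B hBne, Finset.mem_Icc] at hy
    by_cases hzB : B.min' hBne ≤ z
    · refine Finset.mem_biUnion.2 ⟨B, hB, ?_⟩
      rw [fIP_eq B hBne, Finset.mem_Icc]
      exact ⟨hzB, le_trans hzy hy.2⟩
    · push_neg at hzB
      have hzMC : z ≤ C.max' hCne := by
        have h1' : z + 1 ≤ B.min' hBne := hzB
        have h2' : B.min' hBne ≤ b := Finset.min'_le B b hb
        have h3' : c ≤ C.max' hCne := Finset.le_max' C c hc
        omega
      by_cases hzC : C.min' hCne ≤ z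
      · refine Finset.mem_biUnion.2 ⟨C, hC, ?_⟩
        rw [fIP_eq C hCne, Finset.mem_Icc]
        exact ⟨hzC, hzMC⟩
      · push_neg at hzC
        have hmC : C.min' hCne ∈ fIP C := by
          rw [fIP_eq C hCne, Finset.mem_Icc]
          exact ⟨le_refl _, Finset.le_max' C _ (C.min'_mem hCne)⟩
        exact ih x hx _ hmC z hxz (le_of_lt hzC)

lemma sum_le_prod_of_two_le (s : Finset (Finset ℕ)) (hs : s.Nonempty) (f : Finset ℕ → ℕ)
    (hf : ∀ i ∈ s, 2 ≤ f i) : ∑ i ∈ s, f i ≤ ∏ i ∈ s, f i := by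
  induction hs using Finset.Nonempty.cons_induction with
  | singleton a => simp
  | cons a s ha hs ih =>
    rw [Finset.sum_cons, Finset.prod_cons]
    have h1 : ∑ i ∈ s, f i ≤ ∏ i ∈ s, f i :=
      ih fun i hi => hf i (Finset.mem_cons_of_mem hi)
    have h2 : 2 ≤ f a := hf a (Finset.mem_cons_self a s)
    have h3 : 2 ≤ ∏ i ∈ s, f i := by
      obtain ⟨i, hi⟩ := hs
      calc 2 ≤ f i := hf i (Finset.mem_cons_of_mem hi)
      _ ≤ ∏ j ∈ s, f j := Finset.single_le_prod' (fun j hj => le_trans one_le_two (hf j (Finset.mem_cons_of_mem hj))) hi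
    have key : f a + ∏ i ∈ s, f i ≤ f a * ∏ i ∈ s, f i := by nlinarith
    omega

/-- For a nonempty cluster `𝒜` of nonempty polymers, `∑_{A ∈ 𝒜} d(A) ≥ d(𝒜)`;
consequently if every `A ∈ 𝒜` has `d(A) ≥ 2`, then `∏_{A ∈ 𝒜} d(A)^α ≥ d(𝒜)^α`
for every `α > 0`. -/
theorem cluster_diameter_bound (𝒜 : Finset (Finset ℕ)) (h𝒜 : 𝒜.Nonempty)
    (hne : ∀ A ∈ 𝒜, A.Nonempty) (hconn : clusterConn 𝒜) :
    (diamP (𝒜.sup id) ≤ ∑ A ∈ 𝒜, diamP A)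
    ∧ (∀ α : ℝ, 0 < α → (∀ A ∈ 𝒜, 2 ≤ diamP A) →
        ((diamP (𝒜.sup id) : ℝ)) ^ α ≤ ∏ A ∈ 𝒜, ((diamP A : ℝ)) ^ α) := by
  set U := 𝒜.sup id with hU_def
  obtain ⟨A0, hA0⟩ := h𝒜
  obtain ⟨a0, ha0⟩ := hne A0 hA0
  have hU : U.Nonempty := ⟨a0, by
    have : A0 ⊆ U := Finset.le_sup (f := id) hA0
    exact this ha0⟩
  -- min and max of the union belong to some members
  have hmin_mem : U.min' hU ∈ U := U.min'_mem hU
  have hmax_mem : U.max' hU ∈ U := U.max'_mem hU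
  obtain ⟨A, hA, hminA⟩ := Finset.mem_sup.1 hmin_mem
  obtain ⟨B, hB, hmaxB⟩ := Finset.mem_sup.1 hmax_mem
  have hIcc : Finset.Icc (U.min' hU) (U.max' hU) ⊆ 𝒜.biUnion fIP := by
    intro z hz
    rw [Finset.mem_Icc] at hz
    exact interval_subset 𝒜 hne (hconn A hA B hB) hA _ (mem_fIP hminA) _ (mem_fIP hmaxB)
      z hz.1 hz.2
  have hpart1 : diamP U ≤ ∑ A ∈ 𝒜, diamP A := by
    have h1 : diamP U = (Finset.Icc (U.min' hU) (U.max' hU)).card := by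
      rw [diamP_eq_card, fIP_eq U hU]
    rw [h1]
    calc (Finset.Icc (U.min' hU) (U.max' hU)).card
        ≤ (𝒜.biUnion fIP).card := Finset.card_le_card hIcc
      _ ≤ ∑ A ∈ 𝒜, (fIP A).card := Finset.card_biUnion_le
      _ = ∑ A ∈ 𝒜, diamP A := by
          exact Finset.sum_congr rfl fun A _ => (diamP_eq_card A).symm
  refine ⟨hpart1, ?_⟩
  intro α hα h2
  have hNat : diamP U ≤ ∏ A ∈ 𝒜, diamP A :=
    le_trans hpart1 (sum_le_prod_of_two_le 𝒜 ⟨A0, hA0⟩ diamP h2)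
  have hR : (diamP U : ℝ) ≤ ∏ A ∈ 𝒜, (diamP A : ℝ) := by
    exact_mod_cast hNat
  calc ((diamP U : ℝ)) ^ α ≤ (∏ A ∈ 𝒜, (diamP A : ℝ)) ^ α :=
        Real.rpow_le_rpow (by positivity) hR (le_of_lt hα)
    _ = ∏ A ∈ 𝒜, ((diamP A : ℝ)) ^ α :=
        (Real.finset_prod_rpow 𝒜 _ (fun A _ => by positivity) α).symm
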